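/- For every ε ∈ (0,1) there exists δ ∈ (0,1) such that for every function h holomorphic on the open unit disc D ⊂ ℂ with Re h(z) ≤ 1 for all z ∈ D, if Re h(z₀) = 0 for some z₀ with |z₀| ≤ δ, then Re h(z) ≤ ε for all z with |z| ≤ δ. -/

import Mathlib

set_option maxHeartbeats 1000000
open Metric Complex

private lemma moebius_sq (a w : ℂ) :
    Complex.normSq (1 - (starRingEnd ℂ) a * w) - Complex.normSq (w - a)
      = (1 - Complex.normSq a) * (1 - Complex.normSq w) := by
  simp only [Complex.normSq_apply, Complex.sub_re, Complex.sub_im, Complex.mul_re,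
    Complex.mul_im, Complex.one_re, Complex.one_im, Complex.conj_re, Complex.conj_im]
  ring

private lemma abs_lt_abs_of_normSq (x y : ℂ) (h : Complex.normSq x < Complex.normSq y) :
    ‖x‖ < ‖y‖ := by
  rw [Complex.norm_def, Complex.norm_def]
  exact Real.sqrt_lt_sqrt (Complex.normSq_nonneg _) h

private lemma halfplane_rel (u : ℂ) (hu : u.re < 1) :
    1 - Complex.normSq (u / (u - 2)) = (1 - u.re) * Complex.normSq (1 - u / (u - 2)) := by
  have hne : u - 2 ≠ 0 := by
    intro h
    have : u = 2 := by linear_combination h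
    rw [this] at hu; norm_num at hu
  have h1 : 1 - u / (u - 2) = -2 / (u - 2) := by field_simp; ring
  rw [h1, Complex.normSq_div, Complex.normSq_div]
  have hd : Complex.normSq (u - 2) ≠ 0 := ne_of_gt (Complex.normSq_pos.2 hne)
  have h2 : Complex.normSq (u - 2) - Complex.normSq u = 4 - 4 * u.re := by
    simp only [Complex.normSq_apply, Complex.sub_re, Complex.sub_im]
    norm_num; ring
  have h3 : Complex.normSq (-2 : ℂ) = 4 := by norm_num [Complex.normSq_apply]
  field_simp [h3]
  nlinarith [h2]

private lemma strict_version (ε : ℝ) (hε0 : 0 < ε) (hε1 : ε < 1)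
    (h : ℂ → ℂ) (hd : DifferentiableOn ℂ h (ball (0:ℂ) 1))
    (hb : ∀ z ∈ ball (0:ℂ) 1, (h z).re < 1)
    (z₀ : ℂ) (hz₀ : ‖z₀‖ ≤ ε/8) (h0 : (h z₀).re = 0)
    (z : ℂ) (hz : ‖z‖ ≤ ε/8) : (h z).re ≤ ε := by
  have memD : ∀ u : ℂ, ‖u‖ ≤ ε/8 → u ∈ ball (0:ℂ) 1 := by
    intro u hu
    rw [mem_ball, dist_zero_right]
    linarith
  have hz₀D := memD z₀ hz₀
  have hzD := memD z hz
  -- the Cayley-type transform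
  set g : ℂ → ℂ := fun u => h u / (h u - 2) with hg
  have hne : ∀ u ∈ ball (0:ℂ) 1, h u - 2 ≠ 0 := by
    intro u hu heq
    have h2 : h u = 2 := by linear_combination heq
    have := hb u hu
    rw [h2] at this; norm_num at this
  have gd : DifferentiableOn ℂ g (ball (0:ℂ) 1) :=
    hd.div (hd.sub (differentiableOn_const 2)) hne
  have key : ∀ u ∈ ball (0:ℂ) 1,
      1 - Complex.normSq (g u) = (1 - (h u).re) * Complex.normSq (1 - g u) := by
    intro u hu; exact halfplane_rel (h u) (hb u hu)
  have glt : ∀ u ∈ ball (0:ℂ) 1, ‖g u‖ < 1 := by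
    intro u hu
    have k := key u hu
    have h1 : (0:ℝ) < 1 - Complex.normSq (g u) := by
      rw [k]
      have : g u ≠ 1 := by
        intro h1
        have hden := hne u hu
        have h2 : h u = h u - 2 := by
          rw [hg] at h1
          simpa [div_eq_one_iff_eq hden] using h1
        have : (2:ℂ) = 0 := by linear_combination h2
        norm_num at this
      have : (1:ℂ) - g u ≠ 0 := sub_ne_zero.2 (Ne.symm this)
      have := Complex.normSq_pos.2 this
      nlinarith [hb u hu]
    have := abs_lt_abs_of_normSq (g u) 1 (by simpa using by linarith : Complex.normSq (g u) < Complex.normSq 1)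
    simpa using this
  -- recenter with Möbius automorphism
  set a : ℂ := g z₀ with ha_def
  have ha : ‖a‖ < 1 := glt z₀ hz₀D
  have hden2 : ∀ u ∈ ball (0:ℂ) 1, 1 - (starRingEnd ℂ) a * g u ≠ 0 := by
    intro u hu heq
    have : ‖(starRingEnd ℂ) a * g u‖ = 1 := by
      have h1 : (starRingEnd ℂ) a * g u = 1 := by linear_combination -heq
      rw [h1]; simp
    rw [norm_mul, Complex.norm_conj] at this
    nlinarith [glt u hu, norm_nonneg a, norm_nonneg (g u)]
  set F : ℂ → ℂ := fun u => (g u - a) / (1 - (starRingEnd ℂ) a * g u) with hF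
  have Fd : DifferentiableOn ℂ F (ball (0:ℂ) 1) :=
    (gd.sub (differentiableOn_const a)).div
      ((differentiableOn_const 1).sub ((differentiableOn_const _).mul gd)) hden2
  have Flt : ∀ u ∈ ball (0:ℂ) 1, ‖F u‖ < 1 := by
    intro u hu
    have hsq : Complex.normSq (g u - a) < Complex.normSq (1 - (starRingEnd ℂ) a * g u) := by
      have hm := moebius_sq a (g u)
      have h1 : Complex.normSq a < 1 := by
        rw [← Complex.sq_norm]; nlinarith [norm_nonneg a]
      have h2 : Complex.normSq (g u) < 1 := by
        rw [← Complex.sq_norm]; nlinarith [norm_nonneg (g u), glt u hu]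
      nlinarith
    have := abs_lt_abs_of_normSq _ _ hsq
    rw [hF]
    simp only [norm_div]
    rw [div_lt_one (lt_of_le_of_lt (norm_nonneg _) this)]
    exact this
  have hF0 : F z₀ = 0 := by rw [hF]; simp [← ha_def]
  -- Schwarz lemma
  have hsub : ball z₀ (1 - ε/8) ⊆ ball (0:ℂ) 1 := by
    apply ball_subset_ball'
    rw [dist_zero_right]
    linarith
  have hmaps : Set.MapsTo F (ball z₀ (1 - ε/8)) (ball (F z₀) 1) := by
    intro u hu
    rw [hF0, mem_ball, dist_zero_right]
    exact Flt u (hsub hu)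
  have hdzz : dist z z₀ ≤ ε/4 := by
    rw [dist_eq_norm]
    calc ‖z - z₀‖ ≤ ‖z‖ + ‖z₀‖ := norm_sub_le z z₀
    _ ≤ ε/4 := by linarith
  have hzmem : z ∈ ball z₀ (1 - ε/8) := by
    rw [mem_ball]
    linarith
  have schwarz := Complex.dist_le_div_mul_dist_of_mapsTo_ball (Fd.mono hsub) (hmaps.mono_right ball_subset_closedBall) hzmem
  rw [hF0, dist_zero_right] at schwarz
  set s := ‖F z‖ with hs_def
  have hs1 : s < 1 := Flt z hzD
  have hs0 : 0 ≤ s := norm_nonneg _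
  have hc : (0:ℝ) < 1 - ε/8 := by linarith
  have hs : s * (1 - ε/8) ≤ ε/4 := by
    have h1 : s ≤ dist z z₀ / (1 - ε/8) := by
      calc s ≤ 1 / (1 - ε/8) * dist z z₀ := schwarz
      _ = dist z z₀ / (1 - ε/8) := by ring
    have h2 : s * (1 - ε/8) ≤ dist z z₀ := (le_div_iff₀ hc).1 h1
    linarith
  -- final algebra
  set φ := F z with hφ_def
  set w := g z with hw_def
  have hden : 1 - (starRingEnd ℂ) a * w ≠ 0 := hden2 z hzD
  have hrel : w * (1 + (starRingEnd ℂ) a * φ) = φ + a := by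
    have hT : φ * (1 - (starRingEnd ℂ) a * w) = w - a := by
      rw [hφ_def, hF]
      simp only [← hw_def]
      exact div_mul_cancel₀ (w - a) hden
    linear_combination -hT
  have habsφ : ‖(starRingEnd ℂ) a * φ‖ < 1 := by
    rw [norm_mul, Complex.norm_conj]
    nlinarith [norm_nonneg a, ha, hs0, hs1]
  have hden3 : 1 + (starRingEnd ℂ) a * φ ≠ 0 := by
    intro heq
    have h1 : (starRingEnd ℂ) a * φ = -1 := by linear_combination heq
    rw [h1] at habsφ
    simp at habsφ
  set N := Complex.normSq (1 + (starRingEnd ℂ) a * φ) with hN_def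
  have hN : 0 < N := Complex.normSq_pos.2 hden3
  have hm := moebius_sq (-a) φ
  simp only [map_neg, neg_mul, sub_neg_eq_add, Complex.normSq_neg] at hm
  have hwn : Complex.normSq (φ + a) = Complex.normSq w * N := by
    rw [← hrel, Complex.normSq_mul]
  have e1 : (1 - Complex.normSq w) * N
      = (1 - Complex.normSq a) * (1 - Complex.normSq φ) := by
    linear_combination hm + hwn
  have e2 : Complex.normSq (1 - w) * N
      = Complex.normSq ((1 - a) - (1 - (starRingEnd ℂ) a) * φ) := by
    have h1 : (1 - w) * (1 + (starRingEnd ℂ) a * φ)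
        = (1 - a) - (1 - (starRingEnd ℂ) a) * φ := by
      linear_combination -hrel
    rw [← Complex.normSq_mul, h1]
  have e3 : ‖(1 - a) - (1 - (starRingEnd ℂ) a) * φ‖
      ≤ ‖1 - a‖ * (1 + s) := by
    have hconj : ‖1 - (starRingEnd ℂ) a‖ = ‖1 - a‖ := by
      have : (1:ℂ) - (starRingEnd ℂ) a = (starRingEnd ℂ) (1 - a) := by
        simp [map_sub]
      rw [this, Complex.norm_conj]
    calc ‖(1 - a) - (1 - (starRingEnd ℂ) a) * φ‖
        ≤ ‖1 - a‖ + ‖(1 - (starRingEnd ℂ) a) * φ‖ := by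
          simpa using norm_sub_le ((1:ℂ) - a) ((1 - (starRingEnd ℂ) a) * φ)
    _ = ‖1 - a‖ * (1 + s) := by
          rw [norm_mul, hconj, ← hs_def]; ring
  have e4 : Complex.normSq ((1 - a) - (1 - (starRingEnd ℂ) a) * φ)
      ≤ Complex.normSq (1 - a) * (1 + s)^2 := by
    rw [← Complex.sq_norm, ← Complex.sq_norm]
    nlinarith [norm_nonneg ((1 - a) - (1 - (starRingEnd ℂ) a) * φ),
      norm_nonneg (1 - a), e3]
  have ha1 : 1 - Complex.normSq a = Complex.normSq (1 - a) := by
    have hk := key z₀ hz₀D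
    rw [h0, ← ha_def] at hk
    simpa using hk
  have hna : 0 < Complex.normSq (1 - a) := by
    apply Complex.normSq_pos.2
    intro heq
    have : a = 1 := by linear_combination -heq
    rw [this] at ha; simp at ha
  have hφs : Complex.normSq φ = s^2 := by rw [hs_def]; exact (Complex.sq_norm φ).symm
  have kz := key z hzD
  rw [← hw_def] at kz
  have hw1 : 0 < Complex.normSq (1 - w) := by
    apply Complex.normSq_pos.2
    intro heq
    have hww : w = 1 := by linear_combination -heq
    have := glt z hzD
    rw [← hw_def, hww] at this; simp at this
  have h1re : 0 < 1 - (h z).re := by linarith [hb z hzD]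
  have step1 : (1 - (h z).re) * (Complex.normSq (1 - w) * N)
      = Complex.normSq (1 - a) * ((1 - s) * (1 + s)) := by
    linear_combination (-N) * kz + e1 + (1 - Complex.normSq φ) * ha1
      - Complex.normSq (1 - a) * hφs
  have step2 : Complex.normSq (1 - w) * N ≤ Complex.normSq (1 - a) * (1 + s)^2 := by
    rw [e2]; exact e4
  by_contra hcon
  push_neg at hcon
  have k1 : Complex.normSq (1 - a) * ((1 - s) * (1 + s))
      ≤ (1 - (h z).re) * (Complex.normSq (1 - a) * (1 + s)^2) := by
    calc Complex.normSq (1 - a) * ((1 - s) * (1 + s))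
        = (1 - (h z).re) * (Complex.normSq (1 - w) * N) := step1.symm
    _ ≤ _ := mul_le_mul_of_nonneg_left step2 h1re.le
  have hq : (0:ℝ) < Complex.normSq (1 - a) * (1 + s) := mul_pos hna (by linarith)
  have k2 : 1 - s ≤ (1 - (h z).re) * (1 + s) := by
    have k1' : (Complex.normSq (1 - a) * (1 + s)) * (1 - s)
        ≤ (Complex.normSq (1 - a) * (1 + s)) * ((1 - (h z).re) * (1 + s)) := by
      calc (Complex.normSq (1 - a) * (1 + s)) * (1 - s)
          = Complex.normSq (1 - a) * ((1 - s) * (1 + s)) := by ring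
      _ ≤ (1 - (h z).re) * (Complex.normSq (1 - a) * (1 + s)^2) := k1
      _ = (Complex.normSq (1 - a) * (1 + s)) * ((1 - (h z).re) * (1 + s)) := by ring
    exact le_of_mul_le_mul_left k1' hq
  nlinarith [k2, hs, hs0, hε0, hε1, hcon]

theorem schwarz_type_lemma_harmonic :
    ∀ ε : ℝ, ε ∈ Set.Ioo (0 : ℝ) 1 → ∃ δ : ℝ, δ ∈ Set.Ioo (0 : ℝ) 1 ∧
      ∀ h : ℂ → ℂ, DifferentiableOn ℂ h (ball (0 : ℂ) 1) →
        (∀ z ∈ ball (0 : ℂ) 1, (h z).re ≤ 1) →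
        ∀ z₀ : ℂ, ‖z₀‖ ≤ δ → (h z₀).re = 0 →
        ∀ z : ℂ, ‖z‖ ≤ δ → (h z).re ≤ ε := by
  intro ε hε
  obtain ⟨hε0, hε1⟩ := hε
  refine ⟨ε/8, ⟨by linarith, by linarith⟩, ?_⟩
  intro h hd hb z₀ hz₀ h0 z hz
  have H : ∀ t : ℝ, 0 < t → t < 1 → t * (h z).re ≤ ε := by
    intro t ht0 ht1
    have hre : ∀ u : ℂ, ((t:ℂ) * h u).re = t * (h u).re := by
      intro u
      simp [Complex.mul_re, Complex.ofReal_re, Complex.ofReal_im]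
    have hlt : ∀ u ∈ ball (0:ℂ) 1, ((t:ℂ) * h u).re < 1 := by
      intro u hu
      rw [hre]
      nlinarith [hb u hu, mul_le_mul_of_nonneg_left (hb u hu) ht0.le]
    have h0' : ((t:ℂ) * h z₀).re = 0 := by rw [hre, h0]; ring
    have := strict_version ε hε0 hε1 (fun u => (t:ℂ) * h u)
      (hd.const_mul _) hlt z₀ hz₀ h0' z hz
    rwa [hre] at this
  by_cases hpos : (h z).re ≤ 0
  · linarith
  · push_neg at hpos
    by_contra hcon
    push_neg at hcon
    have hr1 : ε / (h z).re < 1 := (div_lt_one hpos).2 hcon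
    have hr0 : 0 < ε / (h z).re := div_pos hε0 hpos
    have hH := H ((ε / (h z).re + 1)/2) (by linarith) (by linarith)
    have heq : (ε / (h z).re + 1)/2 * (h z).re = (ε + (h z).re)/2 := by
      field_simp
    rw [heq] at hH
    linarith
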